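/- Let 𝒟 be a definable subcategory. Every pure submodule of a strictly 𝒟-atomic module is strictly 𝒟-atomic, and every direct sum of strictly 𝒟-atomic modules is strictly 𝒟-atomic. -/

import Mathlib

open TensorProduct DirectSum

universe u v

/-- A pp formula in `n` free variables. -/
structure PPFormula (R : Type u) [Ring R] (n : ℕ) where
  k : ℕ
  m : ℕ
  A : Fin n → Fin m → R
  B : Fin k → Fin m → R

/-- The solution set of a pp formula in a module. -/
def PPFormula.sol {R : Type u} [Ring R] {n : ℕ} (φ : PPFormula R n)
    (M : Type v) [AddCommGroup M] [Module R M] : Set (Fin n → M) :=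
  { a | ∃ b : Fin φ.k → M, ∀ j,
      (∑ i, φ.A i j • a i) + (∑ l, φ.B l j • b l) = 0 }

/-- A submodule `N ≤ M` is pure if `N ⊗ L → M ⊗ L` is injective for every module `L`. -/
def IsPureSubmodule (R : Type u) [CommRing R]
    (M : Type v) [AddCommGroup M] [Module R M] (N : Submodule R M) : Prop :=
  ∀ (L : Type v) [AddCommGroup L] [Module R L],
    Function.Injective (LinearMap.rTensor L N.subtype)

/-- A surjection is a pure epimorphism if its kernel is a pure submodule of the domain. -/
def IsPureEpi (R : Type u) [CommRing R]
    {N : Type v} [AddCommGroup N] [Module R N] {M : Type v} [AddCommGroup M] [Module R M]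
    (f : N →ₗ[R] M) : Prop :=
  Function.Surjective f ∧ IsPureSubmodule R N (LinearMap.ker f)

/-- A class of modules (closed under isomorphism) is definable if it is closed under
direct products, direct limits and pure submodules. -/
def IsDefinableClass (R : Type u) [CommRing R]
    (D : (M : Type v) → [AddCommGroup M] → [Module R M] → Prop) : Prop :=
  (∀ (M N : Type v) [AddCommGroup M] [Module R M] [AddCommGroup N] [Module R N],
      (M ≃ₗ[R] N) → D M → D N) ∧
  (∀ (ι : Type v) (L : ι → Type v) [∀ i, AddCommGroup (L i)] [∀ i, Module R (L i)],
      (∀ i, D (L i)) → D (∀ i, L i)) ∧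
  (∀ (ι : Type v) [Preorder ι] [IsDirected ι (· ≤ ·)] [Nonempty ι] [DecidableEq ι]
      (G : ι → Type v) [∀ i, AddCommGroup (G i)] [∀ i, Module R (G i)]
      (f : ∀ i j, i ≤ j → G i →ₗ[R] G j) [DirectedSystem G (fun i j h => f i j h)],
      (∀ i, D (G i)) → D (Module.DirectLimit G f)) ∧
  (∀ (M : Type v) [AddCommGroup M] [Module R M] (N : Submodule R M),
      IsPureSubmodule R M N → D M → D N)

/-- `φ` generates the pp-type of the tuple `a` of `M` modulo the theory of `𝒟`. -/
def DGenerates (R : Type u) [CommRing R]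
    (D : (M : Type v) → [AddCommGroup M] → [Module R M] → Prop)
    {n : ℕ} (φ : PPFormula R n)
    (M : Type v) [AddCommGroup M] [Module R M] (a : Fin n → M) : Prop :=
  a ∈ φ.sol M ∧ ∀ ψ : PPFormula R n, a ∈ ψ.sol M →
    ∀ (N : Type v) [AddCommGroup N] [Module R N], D N → φ.sol N ⊆ ψ.sol N

/-- `M ∈ 𝒟` is `𝒟`-atomic: every pp-type realised in `M` is `𝒟`-finitely generated. -/
def IsDAtomic (R : Type u) [CommRing R]
    (D : (M : Type v) → [AddCommGroup M] → [Module R M] → Prop)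
    (M : Type v) [AddCommGroup M] [Module R M] : Prop :=
  D M ∧ ∀ (n : ℕ) (a : Fin n → M), ∃ φ : PPFormula R n, DGenerates R D φ M a

/-- `M ∈ 𝒟` is strictly `𝒟`-atomic: it is `𝒟`-atomic and whenever `φ` `𝒟`-generates
the pp-type of `ā` in `M`, every `b̄ ∈ φ(N)` with `N ∈ 𝒟` is the image of `ā` under a
morphism `M → N`. -/
def IsStrictlyDAtomic (R : Type u) [CommRing R]
    (D : (M : Type v) → [AddCommGroup M] → [Module R M] → Prop)
    (M : Type v) [AddCommGroup M] [Module R M] : Prop :=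
  IsDAtomic R D M ∧
    ∀ (n : ℕ) (a : Fin n → M) (φ : PPFormula R n), DGenerates R D φ M a →
      ∀ (N : Type v) [AddCommGroup N] [Module R N], D N →
        ∀ b ∈ φ.sol N, ∃ f : M →ₗ[R] N, ∀ i, f (a i) = b i

section Helpers

variable {R : Type u} [CommRing R]

theorem PPFormula.sol_map {n : ℕ} (φ : PPFormula R n)
    {M : Type*} [AddCommGroup M] [Module R M]
    {N : Type*} [AddCommGroup N] [Module R N] (f : M →ₗ[R] N)
    {a : Fin n → M} (ha : a ∈ φ.sol M) : (fun i => f (a i)) ∈ φ.sol N := by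
  obtain ⟨b, hb⟩ := ha
  refine ⟨fun l => f (b l), fun j => ?_⟩
  have := congrArg f (hb j)
  simpa [map_add, map_sum, map_smul] using this

theorem PPFormula.sol_add {n : ℕ} (φ : PPFormula R n)
    {M : Type*} [AddCommGroup M] [Module R M]
    {a₁ a₂ : Fin n → M} (h₁ : a₁ ∈ φ.sol M) (h₂ : a₂ ∈ φ.sol M) :
    (fun i => a₁ i + a₂ i) ∈ φ.sol M := by
  obtain ⟨b₁, hb₁⟩ := h₁
  obtain ⟨b₂, hb₂⟩ := h₂
  refine ⟨fun l => b₁ l + b₂ l, fun j => ?_⟩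
  have := congrArg₂ (· + ·) (hb₁ j) (hb₂ j)
  simp only [add_zero] at this
  rw [← this]
  simp [smul_add, Finset.sum_add_distrib]
  abel

theorem PPFormula.sol_zero {n : ℕ} (φ : PPFormula R n)
    {M : Type*} [AddCommGroup M] [Module R M] :
    (fun _ : Fin n => (0 : M)) ∈ φ.sol M :=
  ⟨fun _ => 0, fun j => by simp⟩

theorem PPFormula.sol_sum {n : ℕ} (φ : PPFormula R n)
    {M : Type*} [AddCommGroup M] [Module R M]
    {ι : Type*} (s : Finset ι) (x : ι → Fin n → M)
    (h : ∀ i ∈ s, x i ∈ φ.sol M) :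
    (fun j => ∑ i ∈ s, x i j) ∈ φ.sol M := by
  classical
  induction s using Finset.induction with
  | empty => simpa using φ.sol_zero
  | insert _ _ hni ih =>
    rename_i a s
    have := φ.sol_add (h a (Finset.mem_insert_self a s))
      (ih fun i hi => h i (Finset.mem_insert_of_mem hi))
    simpa [Finset.sum_insert hni] using this

theorem PPFormula.exists_indexed {n : ℕ} (K J : Type*) [Fintype K] [Fintype J]
    (A : Fin n → J → R) (B : K → J → R) :
    ∃ φ : PPFormula R n, ∀ (M : Type v) [AddCommGroup M] [Module R M] (a : Fin n → M),
      a ∈ φ.sol M ↔ ∃ b : K → M, ∀ j : J,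
        (∑ i, A i j • a i) + (∑ l, B l j • b l) = 0 := by
  classical
  let eK := Fintype.equivFin K
  let eJ := Fintype.equivFin J
  refine ⟨⟨Fintype.card K, Fintype.card J, fun i j => A i (eJ.symm j),
    fun l j => B (eK.symm l) (eJ.symm j)⟩, ?_⟩
  intro M _ _ a
  constructor
  · rintro ⟨b, hb⟩
    refine ⟨fun l => b (eK l), fun j => ?_⟩
    have h1 := hb (eJ j)
    simp only [eJ.symm_apply_apply] at h1
    have h2 : ∑ l : K, B l j • b (eK l)
        = ∑ l : Fin (Fintype.card K), B (eK.symm l) j • b l :=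
      Fintype.sum_equiv eK _ _ (fun l => by rw [eK.symm_apply_apply])
    rw [h2]; exact h1
  · rintro ⟨b, hb⟩
    refine ⟨fun l => b (eK.symm l), fun j => ?_⟩
    have h1 := hb (eJ.symm j)
    have h2 : ∑ l : Fin (Fintype.card K), B (eK.symm l) (eJ.symm j) • b (eK.symm l)
        = ∑ l : K, B l (eJ.symm j) • b l :=
      Fintype.sum_equiv eK.symm _ _ (fun l => rfl)
    rw [h2]; exact h1

end Helpers


section Key

variable {R : Type u} [CommRing R]

theorem IsPureSubmodule.sol_transfer {M : Type v} [AddCommGroup M] [Module R M]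
    {N : Submodule R M} (hN : IsPureSubmodule R M N) {n : ℕ} (φ : PPFormula R n)
    (a : Fin n → N) (ha : (fun i => (a i : M)) ∈ φ.sol M) : a ∈ φ.sol N := by
  classical
  obtain ⟨b, hb⟩ := ha
  set I : Ideal R := Module.annihilator R M with hI
  let Bmap : (Fin φ.k → R) →ₗ[R] (Fin φ.m → R) :=
    { toFun := fun u j => ∑ l, φ.B l j * u l
      map_add' := by
        intro u v; funext j; simp [mul_add, Finset.sum_add_distrib]
      map_smul' := by
        intro r u; funext j
        simp [Finset.mul_sum, smul_eq_mul, mul_left_comm] }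
  set S : Submodule R (Fin φ.m → R) := LinearMap.range Bmap ⊔ I • ⊤ with hS
  set L₀ := (Fin φ.m → R) ⧸ S with hL₀
  -- smallness
  haveI hsmallRI : Small.{v} (R ⧸ I) := by
    have hker : I ≤ LinearMap.ker (LinearMap.lsmul R M) := by
      intro r hr
      rw [LinearMap.mem_ker]
      ext x
      exact Module.mem_annihilator.mp hr x
    have hginj : Function.Injective (I.liftQ (LinearMap.lsmul R M) hker) := by
      rw [← LinearMap.ker_eq_bot]
      rw [Submodule.ker_liftQ_eq_bot']
      apply le_antisymm hker
      intro r hr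
      rw [LinearMap.mem_ker] at hr
      exact Module.mem_annihilator.mpr fun x => by
        have := congrArg (fun g => g x) (congrArg DFunLike.coe hr)
        simpa using this
    exact small_of_injective hginj
  haveI : Small.{v} L₀ := by
    have hIS : ∀ v₀ : Fin φ.m → R, (∀ j, v₀ j ∈ I) → v₀ ∈ S := by
      intro v₀ hv₀
      have hv : v₀ = ∑ j, Pi.single j (v₀ j) := by
        rw [Finset.univ_sum_single]
      rw [hv]
      refine Submodule.sum_mem _ fun j _ => Submodule.mem_sup_right ?_
      have : Pi.single j (v₀ j) = v₀ j • (Pi.single j 1 : Fin φ.m → R) := by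
        rw [← Pi.single_smul, smul_eq_mul, mul_one]
      rw [this]
      exact Submodule.smul_mem_smul (hv₀ j) trivial
    apply small_of_surjective
      (f := fun (x : Fin φ.m → R ⧸ I) =>
        Submodule.Quotient.mk (p := S) (fun j => Quotient.out (x j)))
    intro y
    obtain ⟨r, rfl⟩ := Submodule.Quotient.mk_surjective S y
    refine ⟨fun j => Submodule.Quotient.mk (r j), ?_⟩
    rw [Submodule.Quotient.eq]
    refine hIS _ fun j => ?_
    have : (Submodule.Quotient.mk (p := I) (Quotient.out (Submodule.Quotient.mk (p := I) (r j))))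
        = Submodule.Quotient.mk (r j) := by
      exact Quotient.out_eq _
    rwa [Submodule.Quotient.eq] at this
  let L := Shrink.{v} L₀
  let e : L ≃ₗ[R] L₀ := Shrink.linearEquiv R L₀
  let π : (Fin φ.m → R) →ₗ[R] L₀ := S.mkQ
  set c : Fin φ.m → N := fun j => ∑ i, φ.A i j • a i with hc
  have hcM : ∀ j, (c j : M) = -∑ l, φ.B l j • b l := by
    intro j
    have h1 := hb j
    have h2 : ((c j : N) : M) = ∑ i, φ.A i j • (a i : M) := by
      simp [hc]
    rw [h2]
    have h3 : (∑ i, φ.A i j • (a i : M)) + ∑ l, φ.B l j • b l = 0 := by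
      simpa using h1
    exact eq_neg_of_add_eq_zero_left h3
  set z : (↥N) ⊗[R] L₀ := ∑ j, (c j) ⊗ₜ[R] π (Pi.single j 1) with hz
  have hπB : ∀ l, π (fun j => φ.B l j) = 0 := by
    intro l
    have : (fun j => φ.B l j) = Bmap (Pi.single l 1) := by
      funext j
      simp only [Bmap, LinearMap.coe_mk, AddHom.coe_mk]
      rw [Finset.sum_eq_single l]
      · simp
      · intro l' _ hl'; simp [Pi.single_apply, hl']
      · simp
    rw [this]
    rw [show π = S.mkQ from rfl, Submodule.mkQ_apply, Submodule.Quotient.mk_eq_zero]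
    exact Submodule.mem_sup_left (LinearMap.mem_range_self _ _)
  have hz0 : LinearMap.rTensor L₀ N.subtype z = 0 := by
    rw [hz, map_sum]
    have hterm : ∀ j, LinearMap.rTensor L₀ N.subtype ((c j) ⊗ₜ[R] π (Pi.single j 1))
        = -∑ l, (b l) ⊗ₜ[R] π (fun j' => (Pi.single j (φ.B l j) : Fin φ.m → R) j') := by
      intro j
      rw [LinearMap.rTensor_tmul]
      have : (N.subtype (c j)) ⊗ₜ[R] π (Pi.single j 1)
          = (-∑ l, φ.B l j • b l) ⊗ₜ[R] π (Pi.single j 1) := by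
        rw [show N.subtype (c j) = (c j : M) from rfl, hcM j]
      rw [this, neg_tmul, sum_tmul]
      congr 1
      refine Finset.sum_congr rfl fun l _ => ?_
      rw [smul_tmul]
      congr 1
      rw [← map_smul]
      congr 1
      funext j'
      simp [Pi.single_apply, smul_eq_mul]
    rw [Finset.sum_congr rfl fun j _ => hterm j]
    rw [Finset.sum_neg_distrib, neg_eq_zero]
    rw [Finset.sum_comm]
    refine Finset.sum_eq_zero fun l _ => ?_
    rw [← tmul_sum, ← map_sum]
    have : (∑ j, fun j' => (Pi.single j (φ.B l j) : Fin φ.m → R) j') = fun j => φ.B l j := by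
      funext j'
      simp only [Finset.sum_apply]
      rw [Finset.sum_congr rfl fun j _ => Pi.single_apply j (φ.B l j) j']
      rw [Finset.sum_ite_eq]
      simp
    rw [this, hπB l, tmul_zero]
  -- purity gives z = 0
  have hzz : z = 0 := by
    let E : (↥N) ⊗[R] L ≃ₗ[R] (↥N) ⊗[R] L₀ := TensorProduct.congr (LinearEquiv.refl R ↥N) e
    let E' : M ⊗[R] L ≃ₗ[R] M ⊗[R] L₀ := TensorProduct.congr (LinearEquiv.refl R M) e
    have hcomm : ∀ w : (↥N) ⊗[R] L,
        LinearMap.rTensor L₀ N.subtype (E w) = E' (LinearMap.rTensor L N.subtype w) := by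
      have : (LinearMap.rTensor L₀ N.subtype).comp (E : (↥N) ⊗[R] L →ₗ[R] (↥N) ⊗[R] L₀)
          = (E' : M ⊗[R] L →ₗ[R] M ⊗[R] L₀).comp (LinearMap.rTensor L N.subtype) := by
        apply TensorProduct.ext'
        intro x y
        simp [E, E']
      exact fun w => DFunLike.congr_fun this w
    have h1 : LinearMap.rTensor L N.subtype (E.symm z) = 0 := by
      apply E'.injective
      rw [← hcomm, E.apply_symm_apply, hz0, map_zero]
    have h2 : E.symm z = 0 := hN L (by rw [h1, map_zero])
    calc z = E (E.symm z) := (E.apply_symm_apply z).symm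
    _ = 0 := by rw [h2, map_zero]
  -- extraction
  let BmapN : (Fin φ.k → N) →ₗ[R] (Fin φ.m → N) :=
    { toFun := fun u j => ∑ l, φ.B l j • u l
      map_add' := by
        intro u v; funext j; simp [smul_add, Finset.sum_add_distrib]
      map_smul' := by
        intro r u; funext j
        simp [Finset.smul_sum, smul_comm r] }
  set SN : Submodule R (Fin φ.m → N) := LinearMap.range BmapN with hSN
  let Φ : (Fin φ.m → R) →ₗ[R] (N →ₗ[R] (Fin φ.m → N) ⧸ SN) :=
    LinearMap.mk₂ R (fun r x => SN.mkQ (fun j => r j • x))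
      (fun r r' x => by
        have h : (fun j => (r + r') j • x) = (fun j => r j • x) + (fun j => r' j • x) := by
          funext j; simp [add_smul]
        show SN.mkQ (fun j => (r + r') j • x)
            = SN.mkQ (fun j => r j • x) + SN.mkQ (fun j => r' j • x)
        rw [h, map_add])
      (fun cc r x => by
        have h : (fun j => (cc • r) j • x) = cc • (fun j => r j • x) := by
          funext j; simp [mul_smul]
        show SN.mkQ (fun j => (cc • r) j • x) = cc • SN.mkQ (fun j => r j • x)
        rw [h, map_smul])
      (fun r x x' => by
        have h : (fun j => r j • (x + x')) = (fun j => r j • x) + (fun j => r j • x') := by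
          funext j; simp [smul_add]
        show SN.mkQ (fun j => r j • (x + x'))
            = SN.mkQ (fun j => r j • x) + SN.mkQ (fun j => r j • x')
        rw [h, map_add])
      (fun cc r x => by
        have h : (fun j => r j • (cc • x)) = cc • (fun j => r j • x) := by
          funext j; simp [smul_comm cc]
        show SN.mkQ (fun j => r j • (cc • x)) = cc • SN.mkQ (fun j => r j • x)
        rw [h, map_smul])
  have hSker : S ≤ LinearMap.ker Φ := by
    rw [hS]
    apply sup_le
    · rintro _ ⟨u, rfl⟩
      rw [LinearMap.mem_ker]
      apply LinearMap.ext
      intro x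
      show SN.mkQ (fun j => Bmap u j • x) = 0
      rw [Submodule.mkQ_apply, Submodule.Quotient.mk_eq_zero]
      refine ⟨fun l => u l • x, ?_⟩
      funext j
      show ∑ l, φ.B l j • (u l • x) = Bmap u j • x
      simp only [Bmap, LinearMap.coe_mk, AddHom.coe_mk]
      rw [Finset.sum_smul]
      refine Finset.sum_congr rfl fun l _ => ?_
      rw [smul_smul]
    · rw [Submodule.smul_le]
      intro i hi v₀ _
      rw [LinearMap.mem_ker]
      apply LinearMap.ext
      intro x
      show SN.mkQ (fun j => (i • v₀) j • x) = 0
      have : (fun j => (i • v₀) j • x) = (0 : Fin φ.m → N) := by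
        funext j
        have hix : i • x = 0 := by
          apply Subtype.ext
          show ((i • x : N) : M) = (0 : M)
          rw [Submodule.coe_smul]
          exact Module.mem_annihilator.mp hi _
        show (i * v₀ j) • x = 0
        rw [mul_comm, mul_smul, hix, smul_zero]
      rw [this, map_zero]
  let F : L₀ →ₗ[R] (N →ₗ[R] (Fin φ.m → N) ⧸ SN) := S.liftQ Φ hSker
  let G : ((↥N) ⊗[R] L₀) →ₗ[R] ((Fin φ.m → N) ⧸ SN) := TensorProduct.lift F.flip
  have hGz : G z = SN.mkQ c := by
    rw [hz, map_sum]
    have hterm : ∀ j, G ((c j) ⊗ₜ[R] π (Pi.single j 1)) = SN.mkQ (Pi.single j (c j)) := by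
      intro j
      show F (π (Pi.single j 1)) (c j) = SN.mkQ (Pi.single j (c j))
      show Φ (Pi.single j 1) (c j) = SN.mkQ (Pi.single j (c j))
      show SN.mkQ (fun j' => (Pi.single j 1 : Fin φ.m → R) j' • c j) = SN.mkQ (Pi.single j (c j))
      congr 1
      funext j'
      simp [Pi.single_apply, ite_smul]
    rw [Finset.sum_congr rfl fun j _ => hterm j, ← map_sum]
    congr 1
    exact Finset.univ_sum_single c
  have hcSN : c ∈ SN := by
    have h0 : SN.mkQ c = 0 := by rw [← hGz, hzz, map_zero]
    rwa [Submodule.mkQ_apply, Submodule.Quotient.mk_eq_zero] at h0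
  obtain ⟨b', hb'⟩ := hcSN
  refine ⟨fun l => -b' l, fun j => ?_⟩
  have h1 : ∑ l, φ.B l j • b' l = c j := congrFun hb' j
  have h2 : ∑ l, φ.B l j • (-b' l) = -c j := by
    rw [← h1, ← Finset.sum_neg_distrib]
    exact Finset.sum_congr rfl fun l _ => (smul_neg _ _)
  rw [h2, hc]
  simp

end Key


section DS

variable {R : Type u} [CommRing R] {ι : Type v} [DecidableEq ι]
  (M : ι → Type v) [∀ i, AddCommGroup (M i)] [∀ i, Module R (M i)]

noncomputable def inclDS : (⨁ i, M i) →ₗ[R] (∀ i, M i) :=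
  DirectSum.toModule R ι _ (fun i => LinearMap.single R M i)

theorem inclDS_apply (x : ⨁ i, M i) (j : ι) : inclDS (R := R) M x j = x j := by
  induction x using DirectSum.induction_on with
  | zero => simp [inclDS]
  | of i m =>
    rw [show (DirectSum.of M i m) = DirectSum.lof R ι M i m from rfl]
    rw [inclDS, DirectSum.toModule_lof]
    by_cases h : i = j
    · subst h
      rw [DirectSum.lof_apply, LinearMap.single_apply, Pi.single_eq_same]
    · rw [LinearMap.single_apply, Pi.single_eq_of_ne (Ne.symm h),
        DirectSum.lof_eq_of, DirectSum.of_eq_of_ne _ _ _ (Ne.symm h)]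
  | add x y hx hy =>
    rw [map_add, Pi.add_apply, DirectSum.add_apply, hx, hy]

theorem inclDS_inj : Function.Injective (inclDS (R := R) M) := by
  intro x y hxy
  refine DirectSum.ext_component R fun i => ?_
  rw [← DirectSum.apply_eq_component, ← DirectSum.apply_eq_component]
  rw [← inclDS_apply (R := R) M x i, ← inclDS_apply (R := R) M y i, hxy]

theorem pure_range_inclDS :
    IsPureSubmodule R (∀ i, M i) (LinearMap.range (inclDS (R := R) M)) := by
  intro L _ _
  have hproj : ∀ i : ι,
      (LinearMap.proj i).comp (inclDS (R := R) M) = DirectSum.component R ι M i := by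
    intro i
    refine DirectSum.linearMap_ext R fun j => ?_
    refine LinearMap.ext fun m => ?_
    show inclDS (R := R) M (DirectSum.lof R ι M j m) i
        = DirectSum.component R ι M i (DirectSum.lof R ι M j m)
    rw [inclDS_apply, ← DirectSum.apply_eq_component]
  have key : ∀ w : (⨁ i, M i) ⊗[R] L,
      LinearMap.rTensor L (inclDS (R := R) M) w = 0 → w = 0 := by
    intro w hw
    have hcompw : ∀ i, LinearMap.rTensor L (DirectSum.component R ι M i) w = 0 := by
      intro i
      rw [← hproj i, LinearMap.rTensor_comp, LinearMap.comp_apply, hw, map_zero]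
    have hcompε : ∀ i : ι,
        (DirectSum.component R ι (fun i => M i ⊗[R] L) i).comp
          ((TensorProduct.directSumLeft R R M L) :
            (⨁ i, M i) ⊗[R] L →ₗ[R] ⨁ i, M i ⊗[R] L)
        = LinearMap.rTensor L (DirectSum.component R ι M i) := by
      intro i
      apply TensorProduct.ext'
      intro x l
      simp only [LinearMap.comp_apply, LinearEquiv.coe_coe]
      induction x using DirectSum.induction_on with
      | zero => simp [zero_tmul]
      | of j m =>
        rw [LinearMap.rTensor_tmul]
        rw [show (DirectSum.of M j m) = DirectSum.lof R ι M j m from rfl]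
        rw [TensorProduct.directSumLeft_tmul_lof]
        rw [← DirectSum.apply_eq_component, ← DirectSum.apply_eq_component]
        by_cases h : j = i
        · subst h
          rw [DirectSum.lof_apply, DirectSum.lof_apply]
        · rw [DirectSum.lof_eq_of, DirectSum.lof_eq_of,
            DirectSum.of_eq_of_ne _ _ _ (Ne.symm h), DirectSum.of_eq_of_ne _ _ _ (Ne.symm h), zero_tmul]
      | add x y hx hy =>
        rw [add_tmul, map_add, map_add, hx, hy, map_add]
    have hε : TensorProduct.directSumLeft R R M L w = 0 := by
      refine DirectSum.ext_component R fun i => ?_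
      rw [show DirectSum.component R ι (fun i => M i ⊗[R] L)
            i (TensorProduct.directSumLeft R R M L w)
          = ((DirectSum.component R ι (fun i => M i ⊗[R] L) i).comp
            ((TensorProduct.directSumLeft R R M L) :
              (⨁ i, M i) ⊗[R] L →ₗ[R] ⨁ i, M i ⊗[R] L)) w from rfl]
      rw [hcompε, hcompw, map_zero]
    exact (TensorProduct.directSumLeft R R M L).injective
      (show _ = TensorProduct.directSumLeft R R M L 0 by rw [hε, map_zero])
  intro x y hxy
  let eDS : (⨁ i, M i) ≃ₗ[R] LinearMap.range (inclDS (R := R) M) :=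
    LinearEquiv.ofInjective _ (inclDS_inj M)
  have hcs : (LinearMap.range (inclDS (R := R) M)).subtype.comp
      (eDS : (⨁ i, M i) →ₗ[R] LinearMap.range (inclDS (R := R) M)) = inclDS (R := R) M := by
    refine LinearMap.ext fun u => ?_
    rfl
  have hfact : ∀ w : (⨁ i, M i) ⊗[R] L, LinearMap.rTensor L (inclDS (R := R) M) w
      = LinearMap.rTensor L (LinearMap.range (inclDS (R := R) M)).subtype
          (LinearMap.rTensor L
            (eDS : (⨁ i, M i) →ₗ[R] LinearMap.range (inclDS (R := R) M)) w) := by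
    intro w
    rw [← LinearMap.comp_apply, ← LinearMap.rTensor_comp, hcs]
  obtain ⟨x', hx'⟩ := LinearMap.rTensor_surjective L
    (g := (eDS : (⨁ i, M i) →ₗ[R] LinearMap.range (inclDS (R := R) M))) eDS.surjective x
  obtain ⟨y', hy'⟩ := LinearMap.rTensor_surjective L
    (g := (eDS : (⨁ i, M i) →ₗ[R] LinearMap.range (inclDS (R := R) M))) eDS.surjective y
  have h0 := key (x' - y') (by rw [map_sub, hfact, hfact, hx', hy', hxy, sub_self])
  rw [sub_eq_zero] at h0
  rw [← hx', ← hy', h0]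

end DS


section SumFormula

variable {R : Type u} [CommRing R]

theorem PPFormula.exists_sum_formula {n : ℕ} (σ : Type*) [Fintype σ] [DecidableEq σ]
    (φ : σ → PPFormula R n) :
    ∃ Ψ : PPFormula R n, ∀ (P : Type v) [AddCommGroup P] [Module R P] (aa : Fin n → P),
      aa ∈ Ψ.sol P ↔ ∃ x : σ → Fin n → P,
        (∀ j, aa j = ∑ i, x i j) ∧ ∀ i, x i ∈ (φ i).sol P := by
  classical
  set K := (σ × Fin n) ⊕ (Σ i : σ, Fin (φ i).k) with hK
  set J := (Fin n) ⊕ (Σ i : σ, Fin (φ i).m) with hJ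
  set A' : Fin n → J → R := fun i' j =>
    match j with
    | Sum.inl j₀ => if i' = j₀ then 1 else 0
    | Sum.inr _ => 0
    with hA'
  set B' : K → J → R := fun l j =>
    match l, j with
    | Sum.inl p, Sum.inl j₀ => if p.2 = j₀ then -1 else 0
    | Sum.inl p, Sum.inr q => if p.1 = q.1 then (φ q.1).A p.2 q.2 else 0
    | Sum.inr _, Sum.inl _ => 0
    | Sum.inr t, Sum.inr q =>
        if h : t.1 = q.1 then (φ q.1).B (Fin.cast (by rw [h]) t.2) q.2 else 0
    with hB'
  obtain ⟨Ψ, hΨ⟩ := PPFormula.exists_indexed K J A' B'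
  refine ⟨Ψ, ?_⟩
  intro P _ _ aa
  rw [hΨ]
  have eq1 : ∀ (b : K → P) (j₀ : Fin n),
      (∑ i, A' i (Sum.inl j₀) • aa i) + (∑ l, B' l (Sum.inl j₀) • b l)
      = aa j₀ - ∑ i : σ, b (Sum.inl (i, j₀)) := by
    intro b j₀
    have hA : ∑ i, A' i (Sum.inl j₀) • aa i = aa j₀ := by
      calc ∑ i, A' i (Sum.inl j₀) • aa i = ∑ i, if i = j₀ then aa i else 0 := by
            refine Finset.sum_congr rfl fun i _ => ?_
            show (if i = j₀ then (1 : R) else 0) • aa i = _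
            split <;> simp
      _ = aa j₀ := by rw [Finset.sum_ite_eq']; simp
    have hB : ∑ l, B' l (Sum.inl j₀) • b l = -∑ i : σ, b (Sum.inl (i, j₀)) := by
      rw [Fintype.sum_sum_type]
      have h2 : ∑ t : Σ i : σ, Fin (φ i).k,
          B' (Sum.inr t) (Sum.inl j₀) • b (Sum.inr t) = 0 := by
        refine Finset.sum_eq_zero fun t _ => ?_
        show (0 : R) • _ = 0
        rw [zero_smul]
      rw [h2, add_zero, Fintype.sum_prod_type]
      calc ∑ i : σ, ∑ j' : Fin n, B' (Sum.inl (i, j')) (Sum.inl j₀) • b (Sum.inl (i, j'))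
          = ∑ i : σ, ∑ j' : Fin n, if j' = j₀ then -(b (Sum.inl (i, j'))) else 0 := by
            refine Finset.sum_congr rfl fun i _ => Finset.sum_congr rfl fun j' _ => ?_
            show (if j' = j₀ then (-1 : R) else 0) • _ = _
            split <;> simp
      _ = ∑ i : σ, -(b (Sum.inl (i, j₀))) := by
            refine Finset.sum_congr rfl fun i _ => ?_
            rw [Finset.sum_ite_eq']
            simp
      _ = -∑ i : σ, b (Sum.inl (i, j₀)) := by rw [Finset.sum_neg_distrib]
    rw [hA, hB, sub_eq_add_neg]
  have eq2 : ∀ (b : K → P) (i₀ : σ) (j : Fin (φ i₀).m),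
      (∑ i, A' i (Sum.inr ⟨i₀, j⟩) • aa i) + (∑ l, B' l (Sum.inr ⟨i₀, j⟩) • b l)
      = (∑ j', (φ i₀).A j' j • b (Sum.inl (i₀, j')))
        + (∑ l, (φ i₀).B l j • b (Sum.inr ⟨i₀, l⟩)) := by
    intro b i₀ j
    have hA : ∑ i, A' i (Sum.inr ⟨i₀, j⟩) • aa i = 0 := by
      refine Finset.sum_eq_zero fun i _ => ?_
      show (0 : R) • _ = 0
      rw [zero_smul]
    have hBl : ∑ p : σ × Fin n, B' (Sum.inl p) (Sum.inr ⟨i₀, j⟩) • b (Sum.inl p)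
        = ∑ j', (φ i₀).A j' j • b (Sum.inl (i₀, j')) := by
      rw [Fintype.sum_prod_type]
      rw [Fintype.sum_eq_single i₀]
      · refine Finset.sum_congr rfl fun j' _ => ?_
        show (if i₀ = i₀ then (φ i₀).A j' j else 0) • _ = _
        rw [if_pos rfl]
      · intro i hi
        refine Finset.sum_eq_zero fun j' _ => ?_
        show (if i = i₀ then (φ i₀).A j' j else 0) • _ = 0
        rw [if_neg hi, zero_smul]
    have hBr : ∑ t : Σ i : σ, Fin (φ i).k,
        B' (Sum.inr t) (Sum.inr ⟨i₀, j⟩) • b (Sum.inr t)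
        = ∑ l, (φ i₀).B l j • b (Sum.inr ⟨i₀, l⟩) := by
      rw [← Finset.univ_sigma_univ, Finset.sum_sigma]
      rw [Fintype.sum_eq_single i₀]
      · refine Finset.sum_congr rfl fun l _ => ?_
        show (if h : i₀ = i₀ then (φ i₀).B (Fin.cast _ l) j else 0) • _ = _
        rw [dif_pos rfl]
        congr 2 <;> first
          | rfl
          | (apply Fin.ext; simp)
      · intro i hi
        refine Finset.sum_eq_zero fun l _ => ?_
        show (if h : i = i₀ then (φ i₀).B (Fin.cast _ l) j else 0) • _ = 0
        rw [dif_neg hi, zero_smul]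
    rw [hA, zero_add, Fintype.sum_sum_type, hBl, hBr]
  constructor
  · rintro ⟨b, hb⟩
    refine ⟨fun i j => b (Sum.inl (i, j)), fun j₀ => ?_,
      fun i₀ => ⟨fun l => b (Sum.inr ⟨i₀, l⟩), fun j => ?_⟩⟩
    · have h := hb (Sum.inl j₀)
      rw [eq1 b j₀] at h
      exact (sub_eq_zero.mp h)
    · have h := hb (Sum.inr ⟨i₀, j⟩)
      rw [eq2 b i₀ j] at h
      exact h
  · rintro ⟨x, hx, hsol⟩
    choose w hw using hsol
    refine ⟨fun l => match l with
      | Sum.inl p => x p.1 p.2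
      | Sum.inr t => w t.1 t.2, fun j => ?_⟩
    match j with
    | Sum.inl j₀ =>
      rw [eq1]
      show aa j₀ - ∑ i : σ, x i j₀ = 0
      rw [hx j₀, sub_self]
    | Sum.inr q =>
      rw [eq2]
      exact hw q.1 q.2

end SumFormula



section Decomp

variable {R : Type u} [CommRing R] {ι : Type v} [DecidableEq ι]
  {M : ι → Type v} [∀ i, AddCommGroup (M i)] [∀ i, Module R (M i)]

theorem DirectSum.eq_sum_lof (x : ⨁ i, M i) (s : Finset ι) (hx : ∀ i ∉ s, x i = 0) :
    x = ∑ i ∈ s, DirectSum.lof R ι M i (x i) := by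
  refine DirectSum.ext_component R fun i' => ?_
  rw [map_sum]
  rw [← DirectSum.apply_eq_component]
  by_cases h : i' ∈ s
  · rw [Finset.sum_eq_single_of_mem i' h (fun i _ hne => by
      rw [← DirectSum.apply_eq_component, DirectSum.lof_eq_of,
        DirectSum.of_eq_of_ne _ _ _ (Ne.symm hne)])]
    rw [← DirectSum.apply_eq_component, DirectSum.lof_apply]
  · rw [Finset.sum_eq_zero (fun i hi => by
      rw [← DirectSum.apply_eq_component, DirectSum.lof_eq_of,
        DirectSum.of_eq_of_ne _ _ _ (Ne.symm fun hh => h (by rw [← hh]; exact hi))])]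
    exact hx i' h

end Decomp

/-!
STATEMENT 13: Pure submodules and arbitrary direct sums of strictly `𝒟`-atomic modules
are strictly `𝒟`-atomic.
-/
theorem strictlyDAtomic_pure_submodule_and_directSum (R : Type u) [CommRing R]
    (D : (M : Type v) → [AddCommGroup M] → [Module R M] → Prop)
    (hD : IsDefinableClass R D) :
    (∀ (M : Type v) [AddCommGroup M] [Module R M] (N : Submodule R M),
        IsPureSubmodule R M N → IsStrictlyDAtomic R D M → IsStrictlyDAtomic R D N) ∧
    (∀ (ι : Type v) [DecidableEq ι] (M : ι → Type v)
        [∀ i, AddCommGroup (M i)] [∀ i, Module R (M i)],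
        (∀ i, IsStrictlyDAtomic R D (M i)) → IsStrictlyDAtomic R D (⨁ i, M i)) := by
  obtain ⟨hIso, hProd, _hLim, hPure⟩ := hD
  constructor
  · -- pure submodules
    intro M _ _ N hpure hM
    obtain ⟨⟨hDM, hAtom⟩, hStrict⟩ := hM
    have hDN : D ↥N := hPure M N hpure hDM
    refine ⟨⟨hDN, ?_⟩, ?_⟩
    · intro n a
      obtain ⟨φ, hφ⟩ := hAtom n (fun i => ↑(a i))
      refine ⟨φ, hpure.sol_transfer φ a hφ.1, ?_⟩
      intro ψ hψ N' _ _ hDN'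
      exact hφ.2 ψ (PPFormula.sol_map ψ N.subtype hψ) N' hDN'
    · intro n a ψ hgen N' _ _ hDN' bb hbb
      have hgenM : DGenerates R D ψ M (fun i => ↑(a i)) := by
        refine ⟨PPFormula.sol_map ψ N.subtype hgen.1, ?_⟩
        intro χ hχ N'' _ _ hDN''
        exact hgen.2 χ (hpure.sol_transfer χ a hχ) N'' hDN''
      obtain ⟨f, hf⟩ := hStrict n (fun i => ↑(a i)) ψ hgenM N' hDN' bb hbb
      exact ⟨f.comp N.subtype, fun i => hf i⟩
  · -- direct sums
    intro ι _ M _ _ hM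
    classical
    have hDds : D (⨁ i, M i) := by
      have hDprod : D (∀ i, M i) := hProd ι M fun i => (hM i).1.1
      have hDr : D ↥(LinearMap.range (inclDS (R := R) M)) :=
        hPure _ _ (pure_range_inclDS M) hDprod
      exact hIso _ _ (LinearEquiv.ofInjective _ (inclDS_inj M)).symm hDr
    have main : ∀ (n : ℕ) (c : Fin n → ⨁ i, M i),
        ∃ Ψ : PPFormula R n, DGenerates R D Ψ (⨁ i, M i) c ∧
          ∃ (s : Finset ι) (φ : ∀ _ : ι, PPFormula R n),
            (∀ i, DGenerates R D (φ i) (M i) (fun j => c j i)) ∧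
            (∀ (P : Type v) [AddCommGroup P] [Module R P], ∀ aa : Fin n → P,
              aa ∈ Ψ.sol P ↔ ∃ x : ↥s → Fin n → P,
                (∀ j, aa j = ∑ i, x i j) ∧ ∀ i : ↥s, x i ∈ (φ ↑i).sol P) ∧
            (∀ j, ∀ i ∉ s, c j i = 0) := by
      intro n c
      have hchoice : ∀ i : ι, ∃ φ : PPFormula R n,
          DGenerates R D φ (M i) (fun j => c j i) :=
        fun i => (hM i).1.2 n (fun j => c j i)
      choose φ hφ using hchoice
      set s : Finset ι := Finset.univ.biUnion (fun j : Fin n => (c j).support) with hs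
      have hsupp : ∀ j, ∀ i, i ∉ s → c j i = 0 := by
        intro j i hi
        by_contra hne
        exact hi (Finset.mem_biUnion.mpr
          ⟨j, Finset.mem_univ j, DFinsupp.mem_support_iff.mpr hne⟩)
      obtain ⟨Ψ, hΨ⟩ := PPFormula.exists_sum_formula (↥s) (fun i => φ ↑i)
      have hmem : c ∈ Ψ.sol (⨁ i, M i) := by
        refine (hΨ (⨁ i, M i) c).mpr
          ⟨fun i => fun j => DirectSum.lof R ι M ↑i (c j ↑i), fun j => ?_, fun i => ?_⟩
        · rw [show (∑ i : ↥s, DirectSum.lof R ι M ↑i (c j ↑i))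
              = ∑ i ∈ s, DirectSum.lof R ι M i (c j i) from
            Finset.sum_coe_sort s (fun i => DirectSum.lof R ι M i (c j i))]
          exact DirectSum.eq_sum_lof (c j) s (hsupp j)
        · exact PPFormula.sol_map (φ ↑i) (DirectSum.lof R ι M ↑i) (hφ ↑i).1
      have hΨgen : DGenerates R D Ψ (⨁ i, M i) c := by
        refine ⟨hmem, ?_⟩
        intro ψ hψ N' _ _ hDN' bb hbb
        obtain ⟨x, hx1, hx2⟩ := (hΨ N' bb).mp hbb
        have hxψ : ∀ i : ↥s, x i ∈ ψ.sol N' := by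
          intro i
          have hci : (fun j => c j ↑i) ∈ ψ.sol (M ↑i) :=
            PPFormula.sol_map ψ (DirectSum.component R ι M ↑i) hψ
          exact (hφ ↑i).2 ψ hci N' hDN' (hx2 i)
        have hsum : (fun j => ∑ i : ↥s, x i j) ∈ ψ.sol N' :=
          PPFormula.sol_sum ψ (Finset.univ : Finset ↥s) x (fun i _ => hxψ i)
        have hbbeq : bb = fun j => ∑ i : ↥s, x i j := funext hx1
        rw [hbbeq]
        exact hsum
      exact ⟨Ψ, hΨgen, s, φ, hφ, hΨ, hsupp⟩
    refine ⟨⟨hDds, ?_⟩, ?_⟩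
    · intro n c
      obtain ⟨Ψ, hΨgen, _⟩ := main n c
      exact ⟨Ψ, hΨgen⟩
    · intro n c ψ hψgen N' _ _ hDN' bb hbb
      obtain ⟨Ψ, hΨgen, s, φ, hφ, hsem, hsupp⟩ := main n c
      have hbbΨ : bb ∈ Ψ.sol N' := hψgen.2 Ψ hΨgen.1 N' hDN' hbb
      obtain ⟨x, hx1, hx2⟩ := (hsem N' bb).mp hbbΨ
      have hgex : ∀ i : ι, ∃ g : M i →ₗ[R] N', ∀ j,
          g (c j i) = if h : i ∈ s then x ⟨i, h⟩ j else 0 := by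
        intro i
        by_cases h : i ∈ s
        · obtain ⟨g, hgg⟩ := (hM i).2 n (fun j => c j i) (φ i) (hφ i) N' hDN'
            (x ⟨i, h⟩) (hx2 ⟨i, h⟩)
          exact ⟨g, fun j => by rw [dif_pos h]; exact hgg j⟩
        · exact ⟨0, fun j => by rw [dif_neg h]; simp⟩
      choose g hg using hgex
      refine ⟨DirectSum.toModule R ι N' g, fun j => ?_⟩
      have hdecomp : c j = ∑ i ∈ s, DirectSum.lof R ι M i (c j i) :=
        DirectSum.eq_sum_lof (c j) s (hsupp j)
      rw [hdecomp, map_sum]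
      calc ∑ i ∈ s, DirectSum.toModule R ι N' g (DirectSum.lof R ι M i (c j i))
          = ∑ i ∈ s, (if h : i ∈ s then x ⟨i, h⟩ j else 0) :=
            Finset.sum_congr rfl fun i _ => by
              rw [DirectSum.toModule_lof]
              exact hg i j
      _ = ∑ i : ↥s, x i j := by
            rw [← Finset.sum_coe_sort s (fun i => if h : i ∈ s then x ⟨i, h⟩ j else 0)]
            refine Finset.sum_congr rfl fun i _ => ?_
            rw [dif_pos i.2]
      _ = bb j := (hx1 j).symm
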